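/- Suppose E → X → Y is a distinguished triangle in D with E ∈ ⟨𝔼⟩, X ∈ ^⊥𝔼 and Y ∈ 𝔼^⊥, where 𝔼 is an exceptional collection. Then Y ≅ L_𝔼(X) and X ≅ R_𝔼(Y). -/

import Mathlib

open CategoryTheory Limits Pretriangulated

universe v u

variable (C : Type u) [Category.{v} C] [Preadditive C] [HasZeroObject C]
  [HasShift C ℤ] [∀ n : ℤ, (CategoryTheory.shiftFunctor C n).Additive] [Pretriangulated C]
  [CategoryTheory.Linear ℂ C]

/-- All graded morphisms from `X` to `Y` vanish. -/
def NoHoms (X Y : C) : Prop := ∀ n : ℤ, ∀ f : X ⟶ Y⟦n⟧, f = 0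

/-- The category `C` is of finite type: total graded Hom spaces are finite dimensional. -/
def FiniteType : Prop :=
  ∀ X Y : C, (∀ n : ℤ, FiniteDimensional ℂ (X ⟶ Y⟦n⟧)) ∧
    {n : ℤ | ∃ f : X ⟶ Y⟦n⟧, f ≠ 0}.Finite

/-- An exceptional object: `Hom^•(E,E) = ℂ`, concentrated in degree `0`. -/
def IsExceptional (E : C) : Prop :=
  (∀ n : ℤ, n ≠ 0 → ∀ f : E ⟶ E⟦n⟧, f = 0) ∧ Module.finrank ℂ (E ⟶ E) = 1

/-- Membership in the smallest strictly full triangulated subcategory containing `S`. -/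
inductive genTriang (S : Set C) : C → Prop
  | of (X : C) (hX : X ∈ S) : genTriang S X
  | isZero (X : C) (hX : IsZero X) : genTriang S X
  | iso {X Y : C} (e : X ≅ Y) (hX : genTriang S X) : genTriang S Y
  | shift (X : C) (n : ℤ) (hX : genTriang S X) : genTriang S (X⟦n⟧)
  | ext₂ (T : Triangle C) (hT : T ∈ distTriang C) (h₁ : genTriang S T.obj₁)
      (h₃ : genTriang S T.obj₃) : genTriang S T.obj₂

/-- The left orthogonal `^⊥S`. -/
def leftOrth (S : Set C) : Set C := {X | ∀ Y ∈ S, NoHoms C X Y}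

/-- The right orthogonal `S^⊥`. -/
def rightOrth (S : Set C) : Set C := {X | ∀ Y ∈ S, NoHoms C Y X}

/-- `Y` is the left mutation of `X` through (the subcategory generated by) `S`. -/
def IsLeftMutation (S : Set C) (X Y : C) : Prop :=
  X ∈ leftOrth C S ∧ Y ∈ rightOrth C S ∧
    ∃ (A : C) (f : A ⟶ X) (g : X ⟶ Y) (h : Y ⟶ A⟦(1:ℤ)⟧),
      genTriang C S A ∧ Triangle.mk f g h ∈ distTriang C

/-- `X` is the right mutation of `Y` through (the subcategory generated by) `S`. -/
def IsRightMutation (S : Set C) (X Y : C) : Prop :=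
  X ∈ leftOrth C S ∧ Y ∈ rightOrth C S ∧
    ∃ (A : C) (f : X ⟶ Y) (g : Y ⟶ A) (h : A ⟶ X⟦(1:ℤ)⟧),
      genTriang C S A ∧ Triangle.mk f g h ∈ distTriang C

/-- `IterLeftMut l X Y` : `Y ≅ L_{E₁} ⋯ L_{E_k} (X)` where `l = [E₁, …, E_k]`. -/
def IterLeftMut : List C → C → C → Prop
  | [], X, Y => Nonempty (X ≅ Y)
  | (E :: t), X, Y => ∃ Z, IterLeftMut t X Z ∧ IsLeftMutation C {E} Z Y

/-- `IterRightMut l Y X` : `X ≅ R_{E_k} ⋯ R_{E₁} (Y)` where `l = [E₁, …, E_k]`. -/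
def IterRightMut : List C → C → C → Prop
  | [], Y, X => Nonempty (Y ≅ X)
  | (E :: t), Y, X => ∃ Z, IsRightMutation C {E} Z Y ∧ IterRightMut t Z X

/-- `E 0, …, E (n-1)` is an exceptional collection. -/
def ExcCollection (n : ℕ) (E : ℕ → C) : Prop :=
  (∀ i < n, IsExceptional C (E i)) ∧
    ∀ i j, i < j → j < n → NoHoms C (E j) (E i)

/-- The set of objects of the collection `E 0, …, E (n-1)`. -/
def collSet (n : ℕ) (E : ℕ → C) : Set C := {X | ∃ i < n, X = E i}


section MutationAux

set_option linter.unusedSectionVars false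

open ZeroObject

variable {C}

lemma noHoms_hom_eq_zero {X Y : C} (h : NoHoms C X Y) (f : X ⟶ Y) : f = 0 := by
  have h0 : f ≫ (shiftFunctorZero C ℤ).inv.app Y = 0 := h 0 _
  calc f = (f ≫ (shiftFunctorZero C ℤ).inv.app Y) ≫ (shiftFunctorZero C ℤ).hom.app Y := by
        rw [Category.assoc, Iso.inv_hom_id_app]; simp
    _ = 0 := by rw [h0, zero_comp]

lemma noHoms_shift_tgt {X Y : C} (h : NoHoms C X Y) (m k : ℤ) (f : X ⟶ (Y⟦m⟧)⟦k⟧) : f = 0 := by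
  have h0 : f ≫ (shiftFunctorAdd C m k).inv.app Y = 0 := h (m + k) _
  calc f = (f ≫ (shiftFunctorAdd C m k).inv.app Y) ≫ (shiftFunctorAdd C m k).hom.app Y := by
        rw [Category.assoc, Iso.inv_hom_id_app]; simp
    _ = 0 := by rw [h0, zero_comp]

lemma noHoms_src_of_genTriang {S : Set C} {A : C} (hA : genTriang C S A) (W : C)
    (hS : ∀ s ∈ S, NoHoms C s W) : NoHoms C A W := by
  induction hA with
  | of X hX => exact hS X hX
  | isZero X hX => exact fun n f => hX.eq_of_src f 0
  | iso e hX ih =>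
    intro n f
    have h0 := ih n (e.hom ≫ f)
    calc f = e.inv ≫ e.hom ≫ f := by rw [Iso.inv_hom_id_assoc]
      _ = 0 := by rw [h0, comp_zero]
  | shift X n hX ih =>
    intro m f
    have h1 : (shiftFunctorCompIsoId C n (-n) (add_neg_cancel n)).inv.app X ≫ f⟦-n⟧' = 0 :=
      noHoms_shift_tgt ih m (-n) _
    have hzero : f⟦-n⟧' = 0 := by
      calc f⟦-n⟧' = (shiftFunctorCompIsoId C n (-n) (add_neg_cancel n)).hom.app X ≫
            ((shiftFunctorCompIsoId C n (-n) (add_neg_cancel n)).inv.app X ≫ f⟦-n⟧') := by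
              rw [Iso.hom_inv_id_app_assoc]
        _ = 0 := by rw [h1, comp_zero]
    exact (shiftFunctor C (-n)).map_injective (by rw [Functor.map_zero]; exact hzero)
  | ext₂ T hT h₁ h₃ ih₁ ih₃ =>
    intro m f
    obtain ⟨g, hg⟩ := Triangle.yoneda_exact₂ T hT f (ih₁ m (T.mor₁ ≫ f))
    rw [hg, ih₃ m g, comp_zero]

lemma noHoms_tgt_of_genTriang {S : Set C} {A : C} (hA : genTriang C S A) (W : C)
    (hS : ∀ s ∈ S, NoHoms C W s) : NoHoms C W A := by
  induction hA with
  | of X hX => exact hS X hX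
  | isZero X hX => exact fun n f => ((shiftFunctor C n).map_isZero hX).eq_of_tgt f 0
  | iso e hX ih =>
    intro n f
    have h0 : f ≫ (shiftFunctor C n).map e.inv = 0 := ih n _
    calc f = (f ≫ (shiftFunctor C n).map e.inv) ≫ (shiftFunctor C n).map e.hom := by
          rw [Category.assoc, ← Functor.map_comp, Iso.inv_hom_id, CategoryTheory.Functor.map_id]; simp
      _ = 0 := by rw [h0, zero_comp]
  | shift X n hX ih =>
    intro m f
    have h0 : f ≫ (shiftFunctorAdd C n m).inv.app X = 0 := ih (n + m) _
    calc f = (f ≫ (shiftFunctorAdd C n m).inv.app X) ≫ (shiftFunctorAdd C n m).hom.app X := by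
          rw [Category.assoc, Iso.inv_hom_id_app]; simp
      _ = 0 := by rw [h0, zero_comp]
  | ext₂ T hT h₁ h₃ ih₁ ih₃ =>
    intro m f
    have hT' : Triangle.mk (m.negOnePow • T.mor₁⟦m⟧') (m.negOnePow • T.mor₂⟦m⟧')
        (m.negOnePow • (T.mor₃⟦m⟧' ≫ (shiftFunctorComm C 1 m).hom.app T.obj₁)) ∈ distTriang C :=
      Triangle.shift_distinguished T hT m
    have hf : f ≫ (m.negOnePow • T.mor₂⟦m⟧') = 0 := by
      rw [Linear.comp_units_smul, ih₃ m (f ≫ T.mor₂⟦m⟧'), smul_zero]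
    obtain ⟨g, hg⟩ := Triangle.coyoneda_exact₂ _ hT' f hf
    rw [hg, show g = 0 from ih₁ m g, zero_comp]; rfl

/-! ### Copowers by finite biproducts -/

@[reducible] noncomputable def cop (A : C) : ℕ → C
  | 0 => 0
  | n + 1 => A ⊞ cop A n

noncomputable def copIn (A : C) : ∀ n : ℕ, Fin n → (A ⟶ cop A n)
  | 0, j => j.elim0
  | n + 1, j => Fin.cases biprod.inl (fun j' => copIn A n j' ≫ biprod.inr) j

noncomputable def copDesc {A P : C} : ∀ n : ℕ, (Fin n → (A ⟶ P)) → (cop A n ⟶ P)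
  | 0, _ => 0
  | n + 1, g => biprod.desc (g 0) (copDesc n fun j => g j.succ)

lemma copIn_desc {A P : C} (n : ℕ) (g : Fin n → (A ⟶ P)) (j : Fin n) :
    copIn A n j ≫ copDesc n g = g j := by
  induction n with
  | zero => exact j.elim0
  | succ n ih =>
    induction j using Fin.cases with
    | zero => simp [copIn, copDesc]
    | succ j' => simp [copIn, copDesc, ih]

lemma genTriang_cop {S : Set C} {A : C} (hA : genTriang C S A) : ∀ n, genTriang C S (cop A n)
  | 0 => genTriang.isZero _ (isZero_zero C)
  | n + 1 => genTriang.ext₂ (binaryBiproductTriangle A (cop A n))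
      (binaryBiproductTriangle_distinguished A (cop A n)) hA (genTriang_cop hA n)

lemma shift_biprod_decomp {A B W : C} (k : ℤ) (v : W ⟶ (A ⊞ B)⟦k⟧) :
    v = (v ≫ biprod.fst⟦k⟧') ≫ biprod.inl⟦k⟧' + (v ≫ biprod.snd⟦k⟧') ≫ biprod.inr⟦k⟧' := by
  have htot : biprod.fst⟦k⟧' ≫ biprod.inl⟦k⟧' + biprod.snd⟦k⟧' ≫ biprod.inr⟦k⟧'
      = 𝟙 ((A ⊞ B)⟦k⟧) := by
    rw [← Functor.map_comp, ← Functor.map_comp, ← Functor.map_add, biprod.total,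
      CategoryTheory.Functor.map_id]
  calc v = v ≫ 𝟙 _ := (Category.comp_id v).symm
    _ = _ := by rw [← htot, Preadditive.comp_add, Category.assoc, Category.assoc]

lemma shift_desc_expand {A B P W : C} (k : ℤ) (v : W ⟶ (A ⊞ B)⟦k⟧) (a : A ⟶ P) (b : B ⟶ P) :
    v ≫ (biprod.desc a b)⟦k⟧' =
      (v ≫ biprod.fst⟦k⟧') ≫ a⟦k⟧' + (v ≫ biprod.snd⟦k⟧') ≫ b⟦k⟧' := by
  conv_lhs => rw [shift_biprod_decomp k v]
  simp only [Preadditive.add_comp, Category.assoc, ← Functor.map_comp, biprod.inl_desc,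
    biprod.inr_desc]

lemma cop_hom_zero {E A : C} {k : ℤ} (hz : ∀ v : E ⟶ A⟦k⟧, v = 0) (n : ℕ)
    (v : E ⟶ (cop A n)⟦k⟧) : v = 0 := by
  induction n with
  | zero => exact ((shiftFunctor C k).map_isZero (isZero_zero C)).eq_of_tgt v 0
  | succ n ih =>
    have hd := shift_biprod_decomp (A := A) (B := cop A n) k v
    rw [hd, hz (v ≫ biprod.fst⟦k⟧'), ih (v ≫ biprod.snd⟦k⟧'), zero_comp, zero_comp, add_zero]

lemma cop_hom_span {E A : C} {k : ℤ} (u₀ : E ⟶ A⟦k⟧)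
    (hone : ∀ v : E ⟶ A⟦k⟧, ∃ c : ℂ, v = c • u₀) (n : ℕ) (v : E ⟶ (cop A n)⟦k⟧) :
    ∃ c : Fin n → ℂ, v = ∑ j, c j • (u₀ ≫ (copIn A n j)⟦k⟧') := by
  induction n with
  | zero =>
    exact ⟨0, by rw [((shiftFunctor C k).map_isZero (isZero_zero C)).eq_of_tgt v 0]; simp⟩
  | succ n ih =>
    obtain ⟨c₀, h₀⟩ := hone (v ≫ biprod.fst⟦k⟧')
    obtain ⟨c', h'⟩ := ih (v ≫ biprod.snd⟦k⟧')
    refine ⟨Fin.cons c₀ c', ?_⟩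
    have hd := shift_biprod_decomp (A := A) (B := cop A n) k v
    rw [hd, h₀, h', Fin.sum_univ_succ]
    congr 1
    · rw [Linear.smul_comp]
      simp [copIn]
    · rw [Preadditive.sum_comp]
      refine Finset.sum_congr rfl fun j _ => ?_
      rw [Linear.smul_comp, Category.assoc, ← Functor.map_comp]
      simp [copIn]

/-! ### Evaluation maps from copowers of an exceptional object -/

noncomputable def toHomC (E P : C) (m : ℤ) (f : E ⟶ P⟦m⟧) : E⟦-m⟧ ⟶ P :=
  f⟦-m⟧' ≫ (shiftFunctorCompIsoId C m (-m) (add_neg_cancel m)).hom.app P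

noncomputable def unitE (E : C) (m : ℤ) : E ⟶ (E⟦-m⟧)⟦m⟧ :=
  (shiftFunctorCompIsoId C (-m) m (neg_add_cancel m)).inv.app E

lemma unitE_toHomC {E P : C} (k : ℤ) (f : E ⟶ P⟦k⟧) :
    unitE E k ≫ (toHomC E P k f)⟦k⟧' = f := by
  dsimp only [unitE, toHomC]
  rw [Functor.map_comp, ← Category.assoc]
  have hnat : (shiftFunctorCompIsoId C (-k) k (neg_add_cancel k)).inv.app E ≫ f⟦-k⟧'⟦k⟧'
      = f ≫ (shiftFunctorCompIsoId C (-k) k (neg_add_cancel k)).inv.app (P⟦k⟧) :=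
    ((shiftFunctorCompIsoId C (-k) k (neg_add_cancel k)).inv.naturality f).symm
  rw [hnat, Category.assoc, shift_shiftFunctorCompIsoId_add_neg_cancel_hom_app,
    Iso.inv_hom_id_app]
  simp

lemma exc_id_span {E : C} (hE : IsExceptional C E) (f : E ⟶ E) : ∃ c : ℂ, f = c • 𝟙 E := by
  have hne : (𝟙 E : E ⟶ E) ≠ 0 := by
    intro h0
    have hall : ∀ g : E ⟶ E, g = 0 := fun g => by rw [← Category.comp_id g, h0, comp_zero]
    have : Subsingleton (E ⟶ E) := ⟨fun a b => by rw [hall a, hall b]⟩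
    have h2 := hE.2
    rw [Module.finrank_zero_of_subsingleton] at h2
    exact zero_ne_one h2
  obtain ⟨c, hc⟩ := (finrank_eq_one_iff_of_nonzero' (𝟙 E) hne).mp hE.2 f
  exact ⟨c, hc.symm⟩

lemma hom_shift_ne_zero {E : C} (hE1 : ∀ n : ℤ, n ≠ 0 → ∀ f : E ⟶ E⟦n⟧, f = 0)
    {m k : ℤ} (hmk : ¬ m = k) (v : E ⟶ (E⟦-m⟧)⟦k⟧) : v = 0 := by
  have h0 : v ≫ (shiftFunctorAdd' C (-m) k (k - m) (by omega)).inv.app E = 0 :=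
    hE1 (k - m) (by omega) _
  calc v = (v ≫ (shiftFunctorAdd' C (-m) k (k - m) (by omega)).inv.app E) ≫
        (shiftFunctorAdd' C (-m) k (k - m) (by omega)).hom.app E := by
        rw [Category.assoc, Iso.inv_hom_id_app]; simp
    _ = 0 := by rw [h0, zero_comp]

lemma hom_shift_self_span {E : C} (hE : IsExceptional C E) (k : ℤ) (v : E ⟶ (E⟦-k⟧)⟦k⟧) :
    ∃ c : ℂ, v = c • unitE E k := by
  obtain ⟨c, hc⟩ :=
    exc_id_span hE (v ≫ (shiftFunctorCompIsoId C (-k) k (neg_add_cancel k)).hom.app E)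
  refine ⟨c, ?_⟩
  calc v = (v ≫ (shiftFunctorCompIsoId C (-k) k (neg_add_cancel k)).hom.app E) ≫
        (shiftFunctorCompIsoId C (-k) k (neg_add_cancel k)).inv.app E := by
        rw [Category.assoc, Iso.hom_inv_id_app]; simp
    _ = c • unitE E k := by rw [hc, Linear.smul_comp, Category.id_comp]; rfl

@[reducible] noncomputable def chunk (E P : C) (m : ℤ) : C := cop (E⟦-m⟧) (Module.finrank ℂ (E ⟶ P⟦m⟧))

noncomputable def chunkEv (E P : C) (m : ℤ) [FiniteDimensional ℂ (E ⟶ P⟦m⟧)] :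
    chunk E P m ⟶ P :=
  copDesc _ fun j => toHomC E P m (Module.finBasis ℂ (E ⟶ P⟦m⟧) j)

lemma chunk_hom_zero {E P : C} (hE1 : ∀ n : ℤ, n ≠ 0 → ∀ f : E ⟶ E⟦n⟧, f = 0) {m k : ℤ}
    (hmk : ¬ m = k) (v : E ⟶ (chunk E P m)⟦k⟧) : v = 0 :=
  cop_hom_zero (fun w => hom_shift_ne_zero hE1 hmk w) _ v

lemma chunkEv_surj {E P : C} (k : ℤ) [FiniteDimensional ℂ (E ⟶ P⟦k⟧)] (w : E ⟶ P⟦k⟧) :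
    ∃ v : E ⟶ (chunk E P k)⟦k⟧, v ≫ (chunkEv E P k)⟦k⟧' = w := by
  set b := Module.finBasis ℂ (E ⟶ P⟦k⟧) with hb
  refine ⟨∑ j, b.repr w j • (unitE E k ≫ (copIn (E⟦-k⟧) _ j)⟦k⟧'), ?_⟩
  rw [Preadditive.sum_comp]
  have hterm : ∀ j, (b.repr w j • (unitE E k ≫ (copIn (E⟦-k⟧) _ j)⟦k⟧')) ≫ (chunkEv E P k)⟦k⟧'
      = b.repr w j • b j := by
    intro j
    rw [Linear.smul_comp, Category.assoc, ← Functor.map_comp,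
      show copIn (E⟦-k⟧) _ j ≫ chunkEv E P k = toHomC E P k (b j) from copIn_desc _ _ j,
      unitE_toHomC]
  rw [Finset.sum_congr rfl fun j _ => hterm j]
  exact b.sum_repr w

lemma chunkEv_inj {E P : C} (hE : IsExceptional C E) (k : ℤ)
    [FiniteDimensional ℂ (E ⟶ P⟦k⟧)] (v : E ⟶ (chunk E P k)⟦k⟧)
    (hv : v ≫ (chunkEv E P k)⟦k⟧' = 0) : v = 0 := by
  obtain ⟨c, hc⟩ := cop_hom_span (unitE E k) (hom_shift_self_span hE k) _ v
  set b := Module.finBasis ℂ (E ⟶ P⟦k⟧) with hb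
  have hsum : ∑ j, c j • b j = 0 := by
    rw [← hv, hc, Preadditive.sum_comp]
    refine Finset.sum_congr rfl fun j _ => ?_
    rw [Linear.smul_comp, Category.assoc, ← Functor.map_comp,
      show copIn (E⟦-k⟧) _ j ≫ chunkEv E P k = toHomC E P k (b j) from copIn_desc _ _ j,
      unitE_toHomC]
  have hc0 : ∀ j, c j = 0 := Fintype.linearIndependent_iff.mp b.linearIndependent c hsum
  rw [hc]
  exact Finset.sum_eq_zero fun j _ => by rw [hc0 j, zero_smul]

@[reducible] noncomputable def Btot (E P : C) : List ℤ → C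
  | [] => 0
  | m :: t => chunk E P m ⊞ Btot E P t

noncomputable def evtot (E P : C) [∀ m : ℤ, FiniteDimensional ℂ (E ⟶ P⟦m⟧)] :
    ∀ L : List ℤ, Btot E P L ⟶ P
  | [] => 0
  | m :: t => biprod.desc (chunkEv E P m) (evtot E P t)

lemma genTriang_Btot (E P : C) : ∀ L : List ℤ, genTriang C {E} (Btot E P L)
  | [] => genTriang.isZero _ (isZero_zero C)
  | m :: t => genTriang.ext₂ (binaryBiproductTriangle (chunk E P m) (Btot E P t))
      (binaryBiproductTriangle_distinguished _ _)
      (genTriang_cop (genTriang.shift (S := ({E} : Set C)) E (-m) (genTriang.of E rfl)) _) (genTriang_Btot E P t)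

lemma Btot_hom_zero {E P : C} (hE1 : ∀ n : ℤ, n ≠ 0 → ∀ f : E ⟶ E⟦n⟧, f = 0) {k : ℤ}
    (L : List ℤ) (hk : k ∉ L) (v : E ⟶ (Btot E P L)⟦k⟧) : v = 0 := by
  induction L with
  | nil => exact ((shiftFunctor C k).map_isZero (isZero_zero C)).eq_of_tgt v 0
  | cons m t ih =>
    have hd := shift_biprod_decomp (A := chunk E P m) (B := Btot E P t) k v
    rw [hd, chunk_hom_zero hE1 (fun h => hk (by rw [← h]; exact (List.mem_cons_self (a := m) (l := t))))
        (v ≫ biprod.fst⟦k⟧'),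
      ih (fun h => hk (List.mem_cons_of_mem m h)) (v ≫ biprod.snd⟦k⟧'),
      zero_comp, zero_comp, add_zero]

lemma evtot_surj {E P : C} [∀ m : ℤ, FiniteDimensional ℂ (E ⟶ P⟦m⟧)] {k : ℤ}
    (L : List ℤ) (hk : k ∈ L) (w : E ⟶ P⟦k⟧) :
    ∃ v : E ⟶ (Btot E P L)⟦k⟧, v ≫ (evtot E P L)⟦k⟧' = w := by
  induction L with
  | nil => simp at hk
  | cons m t ih =>
    rcases List.mem_cons.mp hk with h | h
    · subst h
      obtain ⟨v₁, hv₁⟩ := chunkEv_surj (P := P) k w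
      refine ⟨v₁ ≫ biprod.inl⟦k⟧', ?_⟩
      rw [Category.assoc, ← Functor.map_comp,
        show biprod.inl ≫ evtot E P (k :: t) = chunkEv E P k from biprod.inl_desc _ _]
      exact hv₁
    · obtain ⟨v₂, hv₂⟩ := ih h
      refine ⟨v₂ ≫ biprod.inr⟦k⟧', ?_⟩
      rw [Category.assoc, ← Functor.map_comp,
        show biprod.inr ≫ evtot E P (m :: t) = evtot E P t from biprod.inr_desc _ _]
      exact hv₂

lemma evtot_inj {E P : C} (hE : IsExceptional C E)
    [∀ m : ℤ, FiniteDimensional ℂ (E ⟶ P⟦m⟧)] {k : ℤ}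
    (L : List ℤ) (hnd : L.Nodup) (v : E ⟶ (Btot E P L)⟦k⟧)
    (hv : v ≫ (evtot E P L)⟦k⟧' = 0) : v = 0 := by
  induction L with
  | nil => exact ((shiftFunctor C k).map_isZero (isZero_zero C)).eq_of_tgt v 0
  | cons m t ih =>
    have hd := shift_biprod_decomp (A := chunk E P m) (B := Btot E P t) k v
    have hexp : v ≫ (evtot E P (m :: t))⟦k⟧' =
        (v ≫ biprod.fst⟦k⟧') ≫ (chunkEv E P m)⟦k⟧' +
          (v ≫ biprod.snd⟦k⟧') ≫ (evtot E P t)⟦k⟧' := by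
      rw [show evtot E P (m :: t) = biprod.desc (chunkEv E P m) (evtot E P t) from rfl,
        shift_desc_expand]
    rw [hexp] at hv
    by_cases hkm : m = k
    · subst hkm
      have h2 : v ≫ biprod.snd⟦m⟧' = 0 :=
        Btot_hom_zero hE.1 t (List.nodup_cons.mp hnd).1 _
      rw [h2, zero_comp, add_zero] at hv
      have h1 : v ≫ biprod.fst⟦m⟧' = 0 := chunkEv_inj hE m _ hv
      rw [hd, h1, h2, zero_comp, zero_comp, add_zero]
    · have h1 : v ≫ biprod.fst⟦k⟧' = 0 := chunk_hom_zero hE.1 hkm _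
      rw [h1, zero_comp, zero_add] at hv
      have h2 : v ≫ biprod.snd⟦k⟧' = 0 := ih (List.nodup_cons.mp hnd).2 _ hv
      rw [hd, h1, h2, zero_comp, zero_comp, add_zero]

/-! ### One mutation step through a single exceptional object -/

lemma mutstep (hft : FiniteType C) {E : C} (hE : IsExceptional C E) (P : C) :
    ∃ (B W : C) (a : B ⟶ P) (d : P ⟶ W) (hcon : W ⟶ B⟦(1:ℤ)⟧),
      genTriang C {E} B ∧ (Triangle.mk a d hcon ∈ distTriang C) ∧ NoHoms C E W := by
  haveI : ∀ m : ℤ, FiniteDimensional ℂ (E ⟶ P⟦m⟧) := fun m => (hft E P).1 m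
  set L : List ℤ := (hft E P).2.toFinset.toList with hL
  have hnd : L.Nodup := Finset.nodup_toList _
  have hmem : ∀ m : ℤ, (∃ f : E ⟶ P⟦m⟧, f ≠ 0) → m ∈ L := by
    intro m hm
    have : m ∈ (hft E P).2.toFinset := ((hft E P).2.mem_toFinset).mpr hm
    rw [hL]
    exact Finset.mem_toList.mpr this
  set B := Btot E P L with hB
  set ev : B ⟶ P := evtot E P L with hev
  obtain ⟨W, d, hcon, hT⟩ := Pretriangulated.distinguished_cocone_triangle ev
  refine ⟨B, W, ev, d, hcon, genTriang_Btot E P L, hT, ?_⟩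
  intro k u
  have hT' : Triangle.mk (k.negOnePow • ev⟦k⟧') (k.negOnePow • d⟦k⟧')
      (k.negOnePow • (hcon⟦k⟧' ≫ (shiftFunctorComm C 1 k).hom.app B)) ∈ distTriang C :=
    Triangle.shift_distinguished _ hT k
  set u' : E ⟶ (B⟦k⟧)⟦(1:ℤ)⟧ := u ≫ (hcon⟦k⟧' ≫ (shiftFunctorComm C 1 k).hom.app B) with hu'
  have hz1 : (k.negOnePow • (hcon⟦k⟧' ≫ (shiftFunctorComm C 1 k).hom.app B)) ≫
      (k.negOnePow • ev⟦k⟧')⟦(1:ℤ)⟧' = 0 := comp_distTriang_mor_zero₃₁ _ hT'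
  have hz2 : (hcon⟦k⟧' ≫ (shiftFunctorComm C 1 k).hom.app B) ≫ (ev⟦k⟧')⟦(1:ℤ)⟧' = 0 := by
    rw [Functor.map_units_smul, Linear.units_smul_comp, Linear.comp_units_smul, smul_smul,
      Int.units_mul_self, one_smul] at hz1
    exact hz1
  have hu'ev : u' ≫ (ev⟦k⟧')⟦(1:ℤ)⟧' = 0 := by
    rw [hu', Category.assoc, hz2, comp_zero]
  have hconj : (u' ≫ (shiftFunctorAdd' C k 1 (k+1) rfl).inv.app B) ≫ ev⟦k+1⟧' = 0 := by
    have hnat : (ev⟦k⟧')⟦(1:ℤ)⟧' ≫ (shiftFunctorAdd' C k 1 (k+1) rfl).inv.app P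
        = (shiftFunctorAdd' C k 1 (k+1) rfl).inv.app B ≫ ev⟦k+1⟧' :=
      (shiftFunctorAdd' C k 1 (k+1) rfl).inv.naturality ev
    rw [Category.assoc, ← hnat, ← Category.assoc, hu'ev, zero_comp]
  have hu'0 : u' = 0 := by
    have h0 : u' ≫ (shiftFunctorAdd' C k 1 (k+1) rfl).inv.app B = 0 :=
      evtot_inj hE L hnd _ hconj
    calc u' = (u' ≫ (shiftFunctorAdd' C k 1 (k+1) rfl).inv.app B) ≫
          (shiftFunctorAdd' C k 1 (k+1) rfl).hom.app B := by
          rw [Category.assoc, Iso.inv_hom_id_app]; simp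
      _ = 0 := by rw [h0, zero_comp]
  have humor : u ≫ (k.negOnePow • (hcon⟦k⟧' ≫ (shiftFunctorComm C 1 k).hom.app B)) = 0 := by
    rw [Linear.comp_units_smul, ← hu', hu'0, smul_zero]
  obtain ⟨g, hg⟩ : ∃ g : E ⟶ P⟦k⟧, u = g ≫ (k.negOnePow • d⟦k⟧') :=
    Triangle.coyoneda_exact₃ _ hT' u humor
  by_cases hkL : k ∈ L
  · obtain ⟨v, hv⟩ := evtot_surj L hkL g
    calc u = (v ≫ ev⟦k⟧') ≫ (k.negOnePow • d⟦k⟧') := by rw [hv]; exact hg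
      _ = k.negOnePow • (v ≫ (ev ≫ d)⟦k⟧') := by
          rw [Linear.comp_units_smul, Category.assoc, ← Functor.map_comp]
      _ = 0 := by
          rw [show ev ≫ d = 0 from comp_distTriang_mor_zero₁₂ _ hT, Functor.map_zero,
            comp_zero, smul_zero]
  · have hg0 : g = 0 := by
      by_contra hne
      exact hkL (hmem k ⟨g, hne⟩)
    rw [hg, hg0, zero_comp]

/-! ### The chain of mutations -/

lemma mutation_chain (hft : FiniteType C) (l : List C) (X : C)
    (hexc : ∀ e ∈ l, IsExceptional C e)
    (hso : l.Pairwise (fun a b => NoHoms C b a))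
    (hX : ∀ e ∈ l, NoHoms C X e) :
    ∃ (W : C) (c : X ⟶ W),
      IterLeftMut C l X W ∧ IterRightMut C l W X ∧
      (∀ e ∈ l, NoHoms C e W) ∧
      (∀ Q : C, (∀ e ∈ l, NoHoms C e Q) → ∀ u : X ⟶ Q, ∃ u', c ≫ u' = u) ∧
      (∀ Q : C, (∀ e ∈ l, NoHoms C e Q) → ∀ u : W ⟶ Q, c ≫ u = 0 → u = 0) ∧
      (∀ Q : C, NoHoms C X Q → (∀ e ∈ l, NoHoms C e Q) → NoHoms C W Q) := by
  induction l generalizing X with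
  | nil =>
    refine ⟨X, 𝟙 X, ⟨Iso.refl X⟩, ⟨Iso.refl X⟩, by simp, ?_, ?_, ?_⟩
    · exact fun Q _ u => ⟨u, Category.id_comp u⟩
    · intro Q _ u hu
      rw [← Category.id_comp u]
      exact hu
    · exact fun Q hXQ _ => hXQ
  | cons e t ih =>
    obtain ⟨Z, cz, hIL, hIR, hRO, hF, hEc, hLp⟩ :=
      ih X (fun s hs => hexc s (List.mem_cons_of_mem e hs)) (List.pairwise_cons.mp hso).2
        (fun s hs => hX s (List.mem_cons_of_mem e hs))
    have hte : ∀ s ∈ t, NoHoms C s e := (List.pairwise_cons.mp hso).1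
    have hZe : NoHoms C Z e := hLp e (hX e ((List.mem_cons_self (a := e) (l := t)))) hte
    obtain ⟨B, W, a, d, hcon, hgenB, hTd, hEW⟩ :=
      mutstep hft (hexc e ((List.mem_cons_self (a := e) (l := t)))) Z
    have hZleft : Z ∈ leftOrth C {e} := fun s hs => by
      rw [show s = e from hs]; exact hZe
    have hWright : W ∈ rightOrth C {e} := fun s hs => by
      rw [show s = e from hs]; exact hEW
    refine ⟨W, cz ≫ d, ?_, ?_, ?_, ?_, ?_, ?_⟩
    · exact ⟨Z, hIL, hZleft, hWright, B, a, d, hcon, hgenB, hTd⟩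
    · exact ⟨Z, ⟨hZleft, hWright, B⟦(1:ℤ)⟧, d, hcon, -(a⟦(1:ℤ)⟧'),
        genTriang.shift B 1 hgenB, rot_of_distTriang _ hTd⟩, hIR⟩
    · intro s hs
      rcases List.mem_cons.mp hs with rfl | hs'
      · exact hEW
      · intro m f
        have hT' : Triangle.mk (m.negOnePow • a⟦m⟧') (m.negOnePow • d⟦m⟧')
            (m.negOnePow • (hcon⟦m⟧' ≫ (shiftFunctorComm C 1 m).hom.app B)) ∈ distTriang C :=
          Triangle.shift_distinguished _ hTd m
        have hsB : NoHoms C s B := noHoms_tgt_of_genTriang hgenB s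
          (fun x hx => by rw [show x = e from hx]; exact hte s hs')
        have hf3 : f ≫ (m.negOnePow • (hcon⟦m⟧' ≫ (shiftFunctorComm C 1 m).hom.app B)) = 0 := by
          rw [Linear.comp_units_smul,
            noHoms_shift_tgt hsB m 1 (f ≫ (hcon⟦m⟧' ≫ (shiftFunctorComm C 1 m).hom.app B)),
            smul_zero]
        obtain ⟨g, hg⟩ : ∃ g : s ⟶ Z⟦m⟧, f = g ≫ (m.negOnePow • d⟦m⟧') :=
          Triangle.coyoneda_exact₃ _ hT' f hf3
        rw [hg, hRO s hs' m g, zero_comp]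
    · intro Q hQ u
      obtain ⟨u₁, hu₁⟩ := hF Q (fun s hs => hQ s (List.mem_cons_of_mem e hs)) u
      have hBQ : NoHoms C B Q := noHoms_src_of_genTriang hgenB Q
        (fun x hx => by rw [show x = e from hx]; exact hQ e ((List.mem_cons_self (a := e) (l := t))))
      obtain ⟨u', hu'⟩ : ∃ u' : W ⟶ Q, u₁ = d ≫ u' :=
        Triangle.yoneda_exact₂ _ hTd u₁ (noHoms_hom_eq_zero hBQ (a ≫ u₁))
      exact ⟨u', by rw [Category.assoc, ← hu']; exact hu₁⟩
    · intro Q hQ u hu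
      have h1 : d ≫ u = 0 := hEc Q (fun s hs => hQ s (List.mem_cons_of_mem e hs)) (d ≫ u)
        (by rw [← Category.assoc]; exact hu)
      obtain ⟨g, hg⟩ : ∃ g : B⟦(1:ℤ)⟧ ⟶ Q, u = hcon ≫ g :=
        Triangle.yoneda_exact₃ _ hTd u h1
      have hB1Q : NoHoms C (B⟦(1:ℤ)⟧) Q :=
        noHoms_src_of_genTriang (genTriang.shift B 1 hgenB) Q
          (fun x hx => by rw [show x = e from hx]; exact hQ e ((List.mem_cons_self (a := e) (l := t))))
      rw [hg, noHoms_hom_eq_zero hB1Q g, comp_zero]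
    · intro Q hXQ hQ
      have hZQ : NoHoms C Z Q := hLp Q hXQ (fun s hs => hQ s (List.mem_cons_of_mem e hs))
      have hB1Q : NoHoms C (B⟦(1:ℤ)⟧) Q :=
        noHoms_src_of_genTriang (genTriang.shift B 1 hgenB) Q
          (fun x hx => by rw [show x = e from hx]; exact hQ e ((List.mem_cons_self (a := e) (l := t))))
      intro m f
      obtain ⟨g, hg⟩ : ∃ g : B⟦(1:ℤ)⟧ ⟶ Q⟦m⟧, f = hcon ≫ g :=
        Triangle.yoneda_exact₃ _ hTd f (hZQ m (d ≫ f))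
      rw [hg, hB1Q m g, comp_zero]

/-! ### Transport along isomorphisms -/

lemma IterLeftMut_congr (l : List C) (X W Y : C) (h : IterLeftMut C l X W) (e : W ≅ Y)
    (hY : ∀ s ∈ l, NoHoms C s Y) : IterLeftMut C l X Y := by
  cases l with
  | nil =>
    obtain ⟨i⟩ := h
    exact ⟨i.trans e⟩
  | cons s t =>
    obtain ⟨Z, h1, hl, hr, B, f, g, hcon, hgen, hdist⟩ := h
    refine ⟨Z, h1, hl,
      fun x hx => by rw [show x = s from hx]; exact hY s ((List.mem_cons_self (a := s) (l := t))),
      B, f, g ≫ e.hom, e.inv ≫ hcon, hgen, ?_⟩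
    refine isomorphic_distinguished _ hdist _ ?_
    exact Triangle.isoMk _ _ (Iso.refl _) (Iso.refl _) e.symm (by simp [Triangle.mk]) (by simp [Triangle.mk]) (by simp [Triangle.mk])

lemma IterRightMut_congr (l : List C) (Y W X : C) (h : IterRightMut C l W X) (e : W ≅ Y)
    (hY : ∀ s ∈ l, NoHoms C s Y) : IterRightMut C l Y X := by
  cases l with
  | nil =>
    obtain ⟨i⟩ := h
    exact ⟨e.symm.trans i⟩
  | cons s t =>
    obtain ⟨Z, ⟨hl, hr, B, f, g, hcon, hgen, hdist⟩, h2⟩ := h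
    refine ⟨Z, ⟨hl,
      fun x hx => by rw [show x = s from hx]; exact hY s ((List.mem_cons_self (a := s) (l := t))),
      B, f ≫ e.hom, e.inv ≫ g, hcon, hgen, ?_⟩, h2⟩
    refine isomorphic_distinguished _ hdist _ ?_
    exact Triangle.isoMk _ _ (Iso.refl _) e.symm (Iso.refl _) (by simp [Triangle.mk]) (by simp [Triangle.mk]) (by simp [Triangle.mk])

end MutationAux

/-- If `A → X → Y` is a distinguished triangle with `A ∈ ⟨𝔼⟩`, `X ∈ ^⊥𝔼`
and `Y ∈ 𝔼^⊥` for an exceptional collection `𝔼`, then `Y ≅ L_𝔼(X)` and `X ≅ R_𝔼(Y)`. -/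
theorem mutation_characterisation (hft : FiniteType C) (n : ℕ) (E : ℕ → C)
    (hE : ExcCollection C n E) (A X Y : C)
    (hA : genTriang C (collSet C n E) A)
    (hX : X ∈ leftOrth C (collSet C n E))
    (hY : Y ∈ rightOrth C (collSet C n E))
    (f : A ⟶ X) (g : X ⟶ Y) (h : Y ⟶ A⟦(1:ℤ)⟧)
    (hT : Triangle.mk f g h ∈ distTriang C) :
    IterLeftMut C ((List.range n).map E) X Y ∧
      IterRightMut C ((List.range n).map E) Y X := by
  set l := (List.range n).map E with hl
  have hmem : ∀ s, s ∈ l ↔ s ∈ collSet C n E := by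
    intro s
    simp only [hl, List.mem_map, List.mem_range, collSet, Set.mem_setOf_eq]
    exact ⟨fun ⟨i, hi, hh⟩ => ⟨i, hi, hh.symm⟩, fun ⟨i, hi, hh⟩ => ⟨i, hi, hh.symm⟩⟩
  have hexc : ∀ e ∈ l, IsExceptional C e := by
    intro s hs
    obtain ⟨i, hi, hsi⟩ := (hmem s).mp hs
    rw [hsi]
    exact hE.1 i hi
  have hso : l.Pairwise (fun a b => NoHoms C b a) := by
    rw [hl, List.pairwise_map]
    exact (List.pairwise_lt_range (n := n)).imp_of_mem
      (fun {i j} hi hj hij => hE.2 i j hij (List.mem_range.mp hj))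
  have hXl : ∀ e ∈ l, NoHoms C X e := fun s hs => hX s ((hmem s).mp hs)
  obtain ⟨W, c, hIL, hIR, hRO, hF, hEc, hLp⟩ := mutation_chain hft l X hexc hso hXl
  have hYl : ∀ e ∈ l, NoHoms C e Y := fun s hs => hY s ((hmem s).mp hs)
  have hWl : ∀ s ∈ collSet C n E, NoHoms C s W := fun s hs => hRO s ((hmem s).mpr hs)
  have hAW : NoHoms C A W := noHoms_src_of_genTriang hA W hWl
  have hA1Y : NoHoms C (A⟦(1:ℤ)⟧) Y := noHoms_src_of_genTriang (genTriang.shift A 1 hA) Y hY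
  obtain ⟨φ, hφ⟩ := hF Y hYl g
  obtain ⟨ψ, hψ⟩ : ∃ ψ : Y ⟶ W, c = g ≫ ψ :=
    Triangle.yoneda_exact₂ _ hT c (noHoms_hom_eq_zero hAW (f ≫ c))
  have hφψ : φ ≫ ψ = 𝟙 W := by
    have h0 : c ≫ (φ ≫ ψ - 𝟙 W) = 0 := by
      rw [Preadditive.comp_sub, Category.comp_id, ← Category.assoc, hφ, ← hψ, sub_self]
    have hres := hEc W hRO (φ ≫ ψ - 𝟙 W) h0
    rwa [sub_eq_zero] at hres
  have hψφ : ψ ≫ φ = 𝟙 Y := by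
    have h0 : g ≫ (ψ ≫ φ - 𝟙 Y) = 0 := by
      rw [Preadditive.comp_sub, Category.comp_id, ← Category.assoc, ← hψ, hφ, sub_self]
    obtain ⟨t', ht'⟩ : ∃ t' : A⟦(1:ℤ)⟧ ⟶ Y, ψ ≫ φ - 𝟙 Y = h ≫ t' :=
      Triangle.yoneda_exact₃ _ hT (ψ ≫ φ - 𝟙 Y) h0
    have hres : ψ ≫ φ - 𝟙 Y = 0 := by
      rw [ht', noHoms_hom_eq_zero hA1Y t', comp_zero]
    rwa [sub_eq_zero] at hres
  have eWY : W ≅ Y := ⟨φ, ψ, hφψ, hψφ⟩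
  exact ⟨IterLeftMut_congr l X W Y hIL eWY hYl, IterRightMut_congr l Y W X hIR eWY hYl⟩
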